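/- Let G be a connected m-edge-coloured graph, Γ ≤ S_m transitive, and i ∈ [m]. Let F_Γ be the class of m-edge-coloured cycles that do not admit a Γ-switchable homomorphism to K_2^i. Then G admits a Γ-switchable homomorphism to K_2^i if and only if no cycle C ∈ F_Γ admits a Γ-switchable homomorphism to G. -/

import Mathlib

open Equiv

/-- An `m`-edge-coloured graph on vertex set `V`: `G u v = some i` means there is an
edge `uv` of colour `i` (stored symmetrically), `none` means no edge. -/
abbrev EC (V : Type) (m : ℕ) := V → V → Option (Fin m)

/-- The colouring is stored symmetrically. -/
def ECSymm {V : Type} {m : ℕ} (G : EC V m) : Prop := ∀ u v, G u v = G v u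

/-- Switching at a vertex `v` with a permutation `π` of the colours. -/
def ECswitch {V : Type} [DecidableEq V] {m : ℕ} (G : EC V m) (v : V) (π : Perm (Fin m)) :
    EC V m :=
  fun x y => if x = v ∨ y = v then (G x y).map π else G x y

/-- Switching with respect to a sequence of (vertex, permutation) pairs, applied in order. -/
def ECswitchSeq {V : Type} [DecidableEq V] {m : ℕ} (G : EC V m) :
    List (V × Perm (Fin m)) → EC V m
  | [] => G
  | (v, π) :: rest => ECswitchSeq (ECswitch G v π) rest

/-- All permutations occurring in the sequence belong to the group `Γ`. -/
def ValidSeq {V : Type} {m : ℕ} (Γ : Subgroup (Perm (Fin m)))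
    (L : List (V × Perm (Fin m))) : Prop :=
  ∀ p ∈ L, p.2 ∈ Γ

/-- `Γ`-switch equivalence of two `m`-edge-coloured graphs on the same vertex set. -/
def SwEquiv {V : Type} [DecidableEq V] {m : ℕ} (Γ : Subgroup (Perm (Fin m)))
    (G G' : EC V m) : Prop :=
  ∃ L, ValidSeq Γ L ∧ ECswitchSeq G L = G'

/-- `G` is monochromatic of colour `i`. -/
def Mono {V : Type} {m : ℕ} (G : EC V m) (i : Fin m) : Prop :=
  ∀ u v j, G u v = some j → j = i

/-- `G` admits a `Γ`-switchable homomorphism to `K₂^i` (the single edge of colour `i`). -/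
def SwHomK2 {V : Type} [DecidableEq V] {m : ℕ} (Γ : Subgroup (Perm (Fin m)))
    (G : EC V m) (i : Fin m) : Prop :=
  ∃ L, ValidSeq Γ L ∧ ∃ f : V → Bool,
    ∀ u v j, ECswitchSeq G L u v = some j → f u ≠ f v ∧ j = i

/-- A `Γ`-switchable homomorphism between `m`-edge-coloured graphs. -/
def SwHom {V W : Type} [DecidableEq V] {m : ℕ} (Γ : Subgroup (Perm (Fin m)))
    (G : EC V m) (H : EC W m) : Prop :=
  ∃ L, ValidSeq Γ L ∧ ∃ f : V → W,
    ∀ u v j, ECswitchSeq G L u v = some j → H (f u) (f v) = some j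

/-- `Γ` acts transitively on the colour set `[m]`. -/
def TransOn {m : ℕ} (Γ : Subgroup (Perm (Fin m))) : Prop :=
  ∀ i j : Fin m, ∃ π ∈ Γ, π i = j

/-- `G` is bipartite. -/
def Bip {V : Type} {m : ℕ} (G : EC V m) : Prop :=
  ∃ g : V → Bool, ∀ u v, (G u v).isSome → g u ≠ g v

/-- `G` (its underlying graph) is connected. -/
def Conn {V : Type} {m : ℕ} (G : EC V m) : Prop :=
  ∀ u v : V, Relation.ReflTransGen (fun a b => (G a b).isSome) u v

/-- The `m`-edge-coloured cycle of length `n` on `ZMod n`, where the edge from `x` to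
`x + 1` has colour `c x`. -/
def cycleFromFn {m : ℕ} (n : ℕ) (c : ZMod n → Fin m) : EC (ZMod n) m :=
  fun x y => if y = x + 1 then some (c x) else if x = y + 1 then some (c y) else none

/-- The cycle of length `n` that is nearly monochromatic of colours `(i, j)`:
all edges have colour `i` except the edge from `-1` (that is, `n - 1`) to `0`,
which has colour `j`. -/
def nearCycle {m : ℕ} (n : ℕ) (i j : Fin m) : EC (ZMod n) m :=
  cycleFromFn n (fun x => if x = -1 then j else i)

/-- The monochromatic cycle of length `n` of colour `i`. -/
def monoCycle {m : ℕ} (n : ℕ) (i : Fin m) : EC (ZMod n) m :=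
  cycleFromFn n (fun _ => i)

/-- The `Γ`-substitution class `⟨i⟩`: the colours `j` such that the `4`-cycle nearly
monochromatic of colours `(i, j)` can be switched to be monochromatic of colour `i`. -/
def subClass {m : ℕ} (Γ : Subgroup (Perm (Fin m))) (i : Fin m) : Set (Fin m) :=
  {j | SwEquiv Γ (nearCycle 4 i j) (monoCycle 4 i)}

/-- The underlying simple graph of an `m`-edge-coloured graph. -/
def ECtoSimple {V : Type} {m : ℕ} (G : EC V m) (h : ECSymm G) : SimpleGraph V where
  Adj u v := u ≠ v ∧ (G u v).isSome
  symm := by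
    constructor
    intro u v hv
    exact ⟨Ne.symm hv.1, by rw [h v u]; exact hv.2⟩
  loopless := by constructor; intro v hv; exact hv.1 rfl

/-- The number of edges of an `m`-edge-coloured graph. -/
def edgeCount {V : Type} [Fintype V] {m : ℕ} (G : EC V m) : ℕ :=
  (Finset.univ.filter (fun p : V × V => (G p.1 p.2).isSome)).card / 2

section Basic

variable {V : Type} [DecidableEq V] {m : ℕ}

/-- composite of a list of permutations, first element applied first -/
def app (l : List (Perm (Fin m))) : Perm (Fin m) := l.foldl (fun a g => g * a) 1

lemma app_foldl (l : List (Perm (Fin m))) (a : Perm (Fin m)) :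
    l.foldl (fun a g => g * a) a = app l * a := by
  induction l generalizing a with
  | nil => simp [app]
  | cons x l ih =>
    simp only [List.foldl_cons, app]
    rw [ih (x * a), ih (x * 1)]
    group

lemma app_nil : app ([] : List (Perm (Fin m))) = 1 := rfl

lemma app_cons (x : Perm (Fin m)) (l : List (Perm (Fin m))) :
    app (x :: l) = app l * x := by
  simp only [app, List.foldl_cons]
  rw [app_foldl]; rfl

lemma app_append (l₁ l₂ : List (Perm (Fin m))) :
    app (l₁ ++ l₂) = app l₂ * app l₁ := by
  induction l₁ with
  | nil => simp [app_nil]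
  | cons x l ih => rw [List.cons_append, app_cons, app_cons, ih]; group

lemma app_mem {Γ : Subgroup (Perm (Fin m))} {l : List (Perm (Fin m))}
    (h : ∀ x ∈ l, x ∈ Γ) : app l ∈ Γ := by
  induction l with
  | nil => exact Γ.one_mem
  | cons x l ih =>
    rw [app_cons]
    exact Γ.mul_mem (ih fun y hy => h y (List.mem_cons_of_mem _ hy)) (h x (List.mem_cons_self))

lemma app_reverse_inv (l : List (Perm (Fin m))) :
    app ((l.map (·⁻¹)).reverse) = (app l)⁻¹ := by
  induction l with
  | nil => simp [app_nil]
  | cons x l ih =>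
    simp only [List.map_cons, List.reverse_cons]
    rw [app_append, app_cons, app_cons, app_nil, ih]
    group

/-- The master formula: the effect of a switching sequence on the edge `(a,b)` is
application of the composite of all permutations at `a` or `b`. -/
lemma eff (T : List (V × Perm (Fin m))) (X : EC V m) (a b : V) :
    ECswitchSeq X T a b =
      (X a b).map (app ((T.filter (fun p => p.1 = a ∨ p.1 = b)).map Prod.snd)) := by
  induction T generalizing X with
  | nil => simp [ECswitchSeq, app_nil]
  | cons p T ih =>
    obtain ⟨w, π⟩ := p
    show ECswitchSeq (ECswitch X w π) T a b = _
    rw [ih]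
    by_cases h : w = a ∨ w = b
    · have h2 : a = w ∨ b = w := by tauto
      rw [List.filter_cons_of_pos (by simpa using h), List.map_cons, app_cons]
      simp only [ECswitch, if_pos h2, Option.map_map]
      congr 1
    · have h2 : ¬ (a = w ∨ b = w) := by tauto
      rw [List.filter_cons_of_neg (by simpa using h)]
      simp only [ECswitch, if_neg h2]

end Basic
section Basic2

set_option linter.unusedSectionVars false

variable {V : Type} [DecidableEq V] {m : ℕ}

lemma switchSeq_isSome (T : List (V × Perm (Fin m))) (X : EC V m) (a b : V) :
    (ECswitchSeq X T a b).isSome = (X a b).isSome := by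
  rw [eff]; simp

lemma switchSeq_none_iff (T : List (V × Perm (Fin m))) (X : EC V m) (a b : V) :
    ECswitchSeq X T a b = none ↔ X a b = none := by
  rw [eff]; simp

lemma switchSeq_symm (T : List (V × Perm (Fin m))) (X : EC V m) (h : ECSymm X) :
    ECSymm (ECswitchSeq X T) := by
  intro a b
  rw [eff, eff, h a b]
  have : T.filter (fun p => p.1 = a ∨ p.1 = b) = T.filter (fun p => p.1 = b ∨ p.1 = a) := by
    apply List.filter_congr
    intro p _
    simp [or_comm]
  rw [this]

lemma switchSeq_append (X : EC V m) (A B : List (V × Perm (Fin m))) :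
    ECswitchSeq X (A ++ B) = ECswitchSeq (ECswitchSeq X A) B := by
  induction A generalizing X with
  | nil => rfl
  | cons p A ih => obtain ⟨w, π⟩ := p; exact ih (ECswitch X w π)

lemma validSeq_append {Γ : Subgroup (Perm (Fin m))} {A B : List (V × Perm (Fin m))}
    (hA : ValidSeq Γ A) (hB : ValidSeq Γ B) : ValidSeq Γ (A ++ B) := by
  intro p hp
  rcases List.mem_append.1 hp with h | h
  · exact hA p h
  · exact hB p h

/-- inverse of a switching sequence -/
def invSeq (L : List (V × Perm (Fin m))) : List (V × Perm (Fin m)) :=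
  (L.map (fun p => (p.1, p.2⁻¹))).reverse

lemma invSeq_valid {Γ : Subgroup (Perm (Fin m))} {L : List (V × Perm (Fin m))}
    (h : ValidSeq Γ L) : ValidSeq Γ (invSeq L) := by
  intro p hp
  simp only [invSeq, List.mem_reverse, List.mem_map] at hp
  obtain ⟨q, hq, rfl⟩ := hp
  exact Γ.inv_mem (h q hq)

lemma switchSeq_inv_cancel (X : EC V m) (L : List (V × Perm (Fin m))) :
    ECswitchSeq X (L ++ invSeq L) = X := by
  funext a b
  rw [eff, List.filter_append, List.map_append, app_append]
  have h1 : (invSeq L).filter (fun p => p.1 = a ∨ p.1 = b)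
      = invSeq (L.filter (fun p => p.1 = a ∨ p.1 = b)) := by
    simp only [invSeq, List.filter_reverse, List.filter_map]
    rfl
  have h2 : (invSeq (L.filter (fun p => p.1 = a ∨ p.1 = b))).map Prod.snd
      = (((L.filter (fun p => p.1 = a ∨ p.1 = b)).map Prod.snd).map (·⁻¹)).reverse := by
    simp [invSeq, List.map_reverse, Function.comp_def]
  rw [h1, h2, app_reverse_inv, inv_mul_cancel]
  simp

/-- pullback of a switching sequence along a map of vertex sets -/
noncomputable def pullSeq {W : Type} [DecidableEq W] [Fintype V] (φ : V → W)
    (L : List (W × Perm (Fin m))) : List (V × Perm (Fin m)) :=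
  L.flatMap (fun p => (Finset.univ.filter (fun x => φ x = p.1)).toList.map (fun x => (x, p.2)))

lemma pullSeq_valid {W : Type} [DecidableEq W] [Fintype V] {φ : V → W}
    {Γ : Subgroup (Perm (Fin m))} {L : List (W × Perm (Fin m))} (h : ValidSeq Γ L) :
    ValidSeq Γ (pullSeq φ L) := by
  intro p hp
  simp only [pullSeq, List.mem_flatMap, List.mem_map] at hp
  obtain ⟨q, hq, x, _, rfl⟩ := hp
  exact h q hq

lemma nodup_eq_single {α : Type*} {l : List α} {a : α} (hnd : l.Nodup)
    (hm : ∀ x, x ∈ l ↔ x = a) : l = [a] := by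
  match l, hnd with
  | [], _ => exact absurd ((hm a).2 rfl) List.not_mem_nil
  | [x], _ => rw [(hm x).1 (List.mem_singleton_self x)]
  | x :: y :: t, hnd =>
    exfalso
    have hx : x = a := (hm x).1 (by simp)
    have hy : y = a := (hm y).1 (by simp)
    simp [hx, hy] at hnd

lemma pullSeq_filter {W : Type} [DecidableEq W] [Fintype V] (φ : V → W)
    (L : List (W × Perm (Fin m))) (a b : V) (hab : φ a ≠ φ b) :
    ((pullSeq φ L).filter (fun p => p.1 = a ∨ p.1 = b)).map Prod.snd
      = (L.filter (fun p => p.1 = φ a ∨ p.1 = φ b)).map Prod.snd := by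
  induction L with
  | nil => rfl
  | cons p L ih =>
    obtain ⟨w, π⟩ := p
    have hsplit : pullSeq φ ((w, π) :: L)
        = ((Finset.univ.filter (fun x => φ x = w)).toList.map (fun x => (x, π))) ++ pullSeq φ L :=
      rfl
    rw [hsplit, List.filter_append, List.map_append, ih, List.filter_cons]
    set S := Finset.univ.filter (fun x : V => φ x = w) with hS
    have hmemS : ∀ x : V, x ∈ S ↔ φ x = w := by
      intro x; simp [hS]
    have hbatch : ((S.toList.map (fun x => (x, π))).filter
          (fun p => p.1 = a ∨ p.1 = b)).map Prod.snd
        = (S.toList.filter (fun x => x = a ∨ x = b)).map (fun _ => π) := by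
      rw [List.filter_map]
      simp only [List.map_map]
      congr 1
    rw [hbatch]
    by_cases h : w = φ a ∨ w = φ b
    · have hdec : (decide ((w, π).1 = φ a ∨ (w, π).1 = φ b)) = true := by simpa using h
      rw [if_pos hdec]
      have hone : S.toList.filter (fun x => x = a ∨ x = b) = [a] ∨
          S.toList.filter (fun x => x = a ∨ x = b) = [b] := by
        rcases h with h | h
        · left
          apply nodup_eq_single (List.Nodup.filter _ (Finset.nodup_toList S))
          intro x
          simp only [List.mem_filter, Finset.mem_toList, decide_eq_true_eq, hmemS]
          constructor
          · rintro ⟨hxS, rfl | rfl⟩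
            · rfl
            · exact absurd (hxS.trans h).symm hab
          · rintro rfl; exact ⟨h.symm, Or.inl rfl⟩
        · right
          apply nodup_eq_single (List.Nodup.filter _ (Finset.nodup_toList S))
          intro x
          simp only [List.mem_filter, Finset.mem_toList, decide_eq_true_eq, hmemS]
          constructor
          · rintro ⟨hxS, rfl | rfl⟩
            · exact absurd (hxS.trans h) hab
            · rfl
          · rintro rfl; exact ⟨h.symm, Or.inr rfl⟩
      rcases hone with hone | hone <;> rw [hone] <;> rfl
    · have hdec : ¬ ((decide ((w, π).1 = φ a ∨ (w, π).1 = φ b)) = true) := by simpa using h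
      rw [if_neg hdec]
      have : S.toList.filter (fun x => x = a ∨ x = b) = [] := by
        rw [List.filter_eq_nil_iff]
        intro x hx
        rw [Finset.mem_toList, hmemS] at hx
        simp only [decide_eq_true_eq]
        rintro (rfl | rfl)
        · exact h (Or.inl hx.symm)
        · exact h (Or.inr hx.symm)
      rw [this]
      rfl

/-- homomorphism transfer of switching sequences along a pullback -/
lemma pullSeq_hom {W : Type} [DecidableEq W] [Fintype V] (φ : V → W)
    (X : EC V m) (Y : EC W m)
    (hhom : ∀ a b j, X a b = some j → Y (φ a) (φ b) = some j)
    (hinj : ∀ a b, X a b ≠ none → φ a ≠ φ b)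
    (L : List (W × Perm (Fin m))) :
    ∀ a b j, ECswitchSeq X (pullSeq φ L) a b = some j →
      ECswitchSeq Y L (φ a) (φ b) = some j := by
  intro a b j hj
  rw [eff] at hj ⊢
  have hX : X a b ≠ none := by
    intro hn
    rw [hn] at hj
    simp at hj
  obtain ⟨j₀, hj₀⟩ := Option.ne_none_iff_exists'.1 hX
  have hab := hinj a b hX
  rw [hj₀] at hj
  rw [hhom a b j₀ hj₀]
  rw [pullSeq_filter φ L a b hab] at hj
  exact hj

end Basic2
section Part3

set_option linter.unusedSectionVars false

variable {m : ℕ} {Γ : Subgroup (Perm (Fin m))}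

lemma K2_loopless {V : Type} [DecidableEq V] {G : EC V m} {i : Fin m}
    (hK2 : SwHomK2 Γ G i) : ∀ w, G w w = none := by
  obtain ⟨L, _, f, hf⟩ := hK2
  intro w
  by_contra hn
  obtain ⟨j, hj⟩ := Option.ne_none_iff_exists'.1 hn
  have : ECswitchSeq G L w w = some ((app ((L.filter (fun p => p.1 = w ∨ p.1 = w)).map Prod.snd)) j) := by
    rw [eff, hj]; rfl
  exact (hf w w _ this).1 rfl

/-- composing a switchable hom into `G` with a switchable hom `G → K₂ⁱ`. -/
lemma forward_comp {V : Type} [DecidableEq V] {W : Type} [DecidableEq W] [Fintype W]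
    {G : EC V m} {i : Fin m} (hK2 : SwHomK2 Γ G i)
    {C : EC W m} (hhom : SwHom Γ C G) : SwHomK2 Γ C i := by
  obtain ⟨L', hL', f, hf⟩ := hK2
  obtain ⟨S, hS, φ, hφ⟩ := hhom
  have hloop : ∀ w, G w w = none := K2_loopless ⟨L', hL', f, hf⟩
  refine ⟨S ++ pullSeq φ L', validSeq_append hS (pullSeq_valid hL'), f ∘ φ, ?_⟩
  intro u v j hj
  rw [switchSeq_append] at hj
  have hinj : ∀ a b, ECswitchSeq C S a b ≠ none → φ a ≠ φ b := by
    intro a b hne heq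
    obtain ⟨j₀, hj₀⟩ := Option.ne_none_iff_exists'.1 hne
    have := hφ a b j₀ hj₀
    rw [heq] at this
    rw [hloop (φ b)] at this
    exact Option.some_ne_none _ this.symm
  have := pullSeq_hom φ (ECswitchSeq C S) G hφ hinj L' u v j hj
  exact hf (φ u) (φ v) j this

lemma cycle_edge {l : ℕ} (c : ZMod l → Fin m) (x : ZMod l) :
    cycleFromFn l c x (x + 1) = some (c x) := by
  simp [cycleFromFn]

lemma odd_no_K2 {l : ℕ} [NeZero l] (hodd : l % 2 = 1) (c : ZMod l → Fin m) (i : Fin m) :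
    ¬ SwHomK2 Γ (cycleFromFn l c) i := by
  rintro ⟨L, -, f, hf⟩
  have hstep : ∀ x : ZMod l, f x ≠ f (x + 1) := by
    intro x
    have h1 : (ECswitchSeq (cycleFromFn l c) L x (x+1)).isSome := by
      rw [switchSeq_isSome, cycle_edge]; rfl
    obtain ⟨j, hj⟩ := Option.isSome_iff_exists.1 h1
    exact (hf x (x+1) j hj).1
  have key : ∀ k : ℕ, f (k : ZMod l) = xor (decide (k % 2 = 1)) (f 0) := by
    intro k
    induction k with
    | zero => simp
    | succ k ih =>
      have h1 : ((k+1 : ℕ) : ZMod l) = (k : ZMod l) + 1 := by push_cast; ring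
      have h2 := hstep (k : ZMod l)
      rw [← h1] at h2
      have h3 : f ((k+1 : ℕ) : ZMod l) = ! f ((k : ℕ) : ZMod l) := by
        revert h2; cases f ((k+1:ℕ) : ZMod l) <;> cases f ((k:ℕ) : ZMod l) <;> simp
      rw [h3, ih]
      rcases Nat.even_or_odd k with he | ho
      · have e1 : k % 2 = 0 := Nat.even_iff.1 he
        have e2 : (k+1) % 2 = 1 := by omega
        simp [e1, e2]
      · have e1 : k % 2 = 1 := Nat.odd_iff.1 ho
        have e2 : (k+1) % 2 = 0 := by omega
        simp [e1, e2]
  have h4 := key l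
  rw [hodd, ZMod.natCast_self] at h4
  simp at h4

end Part3
section Part4

set_option linter.unusedSectionVars false

variable {m : ℕ} {Γ : Subgroup (Perm (Fin m))} {i : Fin m}

/-- generators: stabiliser elements of `i` in `Γ`, and commutators of `Γ`. -/
def Mgen (Γ : Subgroup (Perm (Fin m))) (i : Fin m) : Set (Perm (Fin m)) :=
  {π | π ∈ Γ ∧ π i = i} ∪ {π | ∃ a ∈ Γ, ∃ b ∈ Γ, π = a * b * a⁻¹ * b⁻¹}

def M0 (Γ : Subgroup (Perm (Fin m))) (i : Fin m) : Subgroup (Perm (Fin m)) :=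
  Subgroup.closure (Mgen Γ i)

lemma M0_le_Γ : M0 Γ i ≤ Γ := by
  rw [M0, Subgroup.closure_le]
  rintro π (⟨h1, h2⟩ | ⟨a, ha, b, hb, rfl⟩)
  · exact h1
  · exact mul_mem (mul_mem (mul_mem ha hb) (inv_mem ha)) (inv_mem hb)

lemma stab_mem_M0 {π : Perm (Fin m)} (h1 : π ∈ Γ) (h2 : π i = i) : π ∈ M0 Γ i :=
  Subgroup.subset_closure (Or.inl ⟨h1, h2⟩)

lemma comm_mem_M0 {a b : Perm (Fin m)} (ha : a ∈ Γ) (hb : b ∈ Γ) :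
    a * b * a⁻¹ * b⁻¹ ∈ M0 Γ i :=
  Subgroup.subset_closure (Or.inr ⟨a, ha, b, hb, rfl⟩)

lemma conj_mem_M0 {g x : Perm (Fin m)} (hg : g ∈ Γ) (hx : x ∈ M0 Γ i) :
    g * x * g⁻¹ ∈ M0 Γ i := by
  have hxΓ : x ∈ Γ := M0_le_Γ hx
  have h : g * x * g⁻¹ = (g * x * g⁻¹ * x⁻¹) * x := by group
  rw [h]
  exact mul_mem (comm_mem_M0 hg hxΓ) hx

/-- a choice of a group element sending `i` to `j` -/
noncomputable def ggc (htr : TransOn Γ) (i j : Fin m) : Perm (Fin m) :=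
  Classical.choose (htr i j)

lemma ggc_mem (htr : TransOn Γ) (j : Fin m) : ggc htr i j ∈ Γ :=
  (Classical.choose_spec (htr i j)).1

lemma ggc_spec (htr : TransOn Γ) (j : Fin m) : ggc htr i j i = j :=
  (Classical.choose_spec (htr i j)).2

lemma ggc_i_mem_M0 (htr : TransOn Γ) : ggc htr i i ∈ M0 Γ i :=
  stab_mem_M0 (ggc_mem htr i) (ggc_spec htr i)

/-- the `s`-element witnessing `ggc (π j) ≡ π * ggc j` mod stabiliser -/
lemma ggc_twist (htr : TransOn Γ) {π : Perm (Fin m)} (hπ : π ∈ Γ) (j : Fin m) :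
    ∃ s : Perm (Fin m), s ∈ Γ ∧ s i = i ∧ ggc htr i (π j) = π * ggc htr i j * s⁻¹ := by
  refine ⟨(ggc htr i (π j))⁻¹ * π * ggc htr i j, ?_, ?_, by group⟩
  · exact mul_mem (mul_mem (inv_mem (ggc_mem htr _)) hπ) (ggc_mem htr _)
  · have h1 : (π * ggc htr i j) i = π j := by
      rw [Equiv.Perm.mul_apply, ggc_spec]
    have h2 : ggc htr i (π j) i = π j := ggc_spec htr _
    have h3 : ((ggc htr i (π j))⁻¹ * π * ggc htr i j) i = (ggc htr i (π j))⁻¹ (π j) := by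
      simp only [Equiv.Perm.mul_apply, ggc_spec htr j]
    have h4 : (ggc htr i (π j))⁻¹ (π j) = (ggc htr i (π j))⁻¹ ((ggc htr i (π j)) i) := by
      rw [h2]
    rw [h3, h4, Equiv.Perm.inv_def, Equiv.symm_apply_apply]

/-- the alternating term function -/
noncomputable def termF (htr : TransOn Γ) (i : Fin m) (l : ℕ) (c : ZMod l → Fin m)
    (k : ℕ) : Perm (Fin m) :=
  if k % 2 = 0 then ggc htr i (c ↑k) else (ggc htr i (c ↑k))⁻¹

lemma termF_mem (htr : TransOn Γ) (l : ℕ) (c : ZMod l → Fin m) (k : ℕ) :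
    termF htr i l c k ∈ Γ := by
  unfold termF
  split
  · exact ggc_mem htr _
  · exact inv_mem (ggc_mem htr _)

/-- the alternating product invariant -/
noncomputable def AP (htr : TransOn Γ) (i : Fin m) (l : ℕ) (c : ZMod l → Fin m) :
    Perm (Fin m) :=
  ((List.range l).map (termF htr i l c)).prod

lemma AP_mem (htr : TransOn Γ) (l : ℕ) (c : ZMod l → Fin m) : AP htr i l c ∈ Γ := by
  apply Subgroup.list_prod_mem
  intro x hx
  obtain ⟨k, _, rfl⟩ := List.mem_map.1 hx
  exact termF_mem htr l c k

lemma prod_split {G : Type*} [Group G] (F : ℕ → G) {p l : ℕ} (hp : p < l) :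
    ((List.range l).map F).prod
      = ((List.range p).map F).prod * F p
          * ((List.range (l - (p+1))).map (fun t => F (t + (p+1)))).prod := by
  have h : l = (p + 1) + (l - (p+1)) := by omega
  conv_lhs => rw [h, List.range_add, List.range_succ]
  rw [List.map_append, List.prod_append, List.map_append, List.prod_append, List.map_map]
  have h2 : (List.range (l - (p + 1))).map (F ∘ fun x => p + 1 + x)
      = (List.range (l - (p + 1))).map (fun t => F (t + (p + 1))) := by
    apply List.map_congr_left
    intro t _
    simp [Function.comp, Nat.add_comm]
  rw [h2]
  simp [mul_assoc]

lemma prod_two_update {G : Type*} [Group G] (F F' : ℕ → G) {q p l : ℕ}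
    (hq : q < p) (hp : p < l)
    (hsame : ∀ k, k < l → k ≠ p → k ≠ q → F' k = F k) :
    ∃ B1 B2 B3 : G,
      (∀ K : Subgroup G, (∀ k, k < l → F k ∈ K) → B1 ∈ K ∧ B2 ∈ K ∧ B3 ∈ K) ∧
      ((List.range l).map F).prod = B1 * F q * (B2 * F p * B3) ∧
      ((List.range l).map F').prod = B1 * F' q * (B2 * F' p * B3) ∧
      (p = q + 1 → B2 = 1) ∧ (q = 0 → B1 = 1) ∧ (p = l - 1 → B3 = 1) := by
  refine ⟨((List.range q).map F).prod,
    ((List.range (p - (q+1))).map (fun t => F (t + (q+1)))).prod,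
    ((List.range (l - (p+1))).map (fun t => F (t + (p+1)))).prod, ?_, ?_, ?_, ?_, ?_, ?_⟩
  · intro K hK
    refine ⟨Subgroup.list_prod_mem K ?_, Subgroup.list_prod_mem K ?_, Subgroup.list_prod_mem K ?_⟩
    all_goals
      intro x hx
      obtain ⟨t, ht, rfl⟩ := List.mem_map.1 hx
      rw [List.mem_range] at ht
      apply hK
      omega
  · rw [prod_split F hp, prod_split F (show q < p by omega)]
    simp [mul_assoc]
  · rw [prod_split F' hp, prod_split F' (show q < p by omega)]
    have e1 : (List.range q).map F' = (List.range q).map F := by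
      apply List.map_congr_left
      intro t ht
      rw [List.mem_range] at ht
      exact hsame t (by omega) (by omega) (by omega)
    have e2 : (List.range (p - (q+1))).map (fun t => F' (t + (q+1)))
        = (List.range (p - (q+1))).map (fun t => F (t + (q+1))) := by
      apply List.map_congr_left
      intro t ht
      rw [List.mem_range] at ht
      exact hsame _ (by omega) (by omega) (by omega)
    have e3 : (List.range (l - (p+1))).map (fun t => F' (t + (p+1)))
        = (List.range (l - (p+1))).map (fun t => F (t + (p+1))) := by
      apply List.map_congr_left
      intro t ht
      rw [List.mem_range] at ht
      exact hsame _ (by omega) (by omega) (by omega)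
    rw [e1, e2, e3]
    simp [mul_assoc]
  · intro h; rw [h]; simp
  · intro h; rw [h]; simp
  · intro h
    have : l - (p + 1) = 0 := by omega
    rw [this]; simp

end Part4
section Part5

set_option linter.unusedSectionVars false
set_option maxHeartbeats 1000000

variable {m : ℕ} {Γ : Subgroup (Perm (Fin m))} {i : Fin m}

lemma cycle_switch {l : ℕ} (c : ZMod l → Fin m) (v : ZMod l) (π : Perm (Fin m)) :
    ECswitch (cycleFromFn l c) v π
      = cycleFromFn l (fun x => if v = x ∨ v = x + 1 then π (c x) else c x) := by
  funext x y
  simp only [ECswitch, cycleFromFn]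
  by_cases h1 : y = x + 1
  · have e1 : (x = v ∨ y = v) ↔ (v = x ∨ v = x + 1) := by
      subst h1
      constructor
      · rintro (h | h)
        · exact Or.inl h.symm
        · exact Or.inr h.symm
      · rintro (h | h)
        · exact Or.inl h.symm
        · exact Or.inr h.symm
    rw [if_pos h1, if_pos h1]
    by_cases h2 : v = x ∨ v = x + 1
    · rw [if_pos (e1.2 h2), if_pos h2]; rfl
    · rw [if_neg (fun hh => h2 (e1.1 hh)), if_neg h2]
  · rw [if_neg h1, if_neg h1]
    by_cases h3 : x = y + 1
    · have e1 : (x = v ∨ y = v) ↔ (v = y ∨ v = y + 1) := by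
        subst h3
        constructor
        · rintro (h | h)
          · exact Or.inr h.symm
          · exact Or.inl h.symm
        · rintro (h | h)
          · exact Or.inr h.symm
          · exact Or.inl h.symm
      by_cases h2 : v = y ∨ v = y + 1
      · rw [if_pos (e1.2 h2), if_pos h3, if_pos h3, if_pos h2]; rfl
      · rw [if_neg (fun hh => h2 (e1.1 hh)), if_pos h3, if_pos h3, if_neg h2]
    · rw [if_neg h3, if_neg h3]
      split <;> rfl

lemma zmod_cast_inj {l : ℕ} [NeZero l] {a b : ℕ} (ha : a < l) (hb : b < l)
    (h : ((a : ℕ) : ZMod l) = ((b : ℕ) : ZMod l)) : a = b := by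
  have := congrArg ZMod.val h
  rwa [ZMod.val_cast_of_lt ha, ZMod.val_cast_of_lt hb] at this

lemma zmod_last {l : ℕ} [NeZero l] (hl : 1 ≤ l) : ((l - 1 : ℕ) : ZMod l) = -1 := by
  rw [Nat.cast_sub hl, ZMod.natCast_self, Nat.cast_one]
  ring

lemma AP_switch {l : ℕ} [NeZero l] (htr : TransOn Γ) (hl : 3 ≤ l) (heven : l % 2 = 0)
    (c : ZMod l → Fin m) (v : ZMod l) {π : Perm (Fin m)} (hπ : π ∈ Γ) :
    AP htr i l (fun x => if v = x ∨ v = x + 1 then π (c x) else c x)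
      * (AP htr i l c)⁻¹ ∈ M0 Γ i := by
  set c' : ZMod l → Fin m := fun x => if v = x ∨ v = x + 1 then π (c x) else c x with hc'
  have happ : ∀ x : ZMod l, c' x = if v = x ∨ v = x + 1 then π (c x) else c x := fun x => rfl
  have hvv : ((v.val : ℕ) : ZMod l) = v := ZMod.natCast_rightInverse v
  have hvlt : v.val < l := ZMod.val_lt v
  obtain ⟨p, q, hq, hp, hcq, hcp, hsame, hscen⟩ :
      ∃ p q, q < p ∧ p < l ∧
        c' ↑q = π (c ↑q) ∧ c' ↑p = π (c ↑p) ∧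
        (∀ k, k < l → k ≠ p → k ≠ q → c' ↑k = c ↑k) ∧
        (p = q + 1 ∨ (q = 0 ∧ p = l - 1)) := by
    by_cases hv0 : v.val = 0
    · have hv : v = 0 := by rw [← hvv, hv0]; simp
      refine ⟨l - 1, 0, by omega, by omega, ?_, ?_, ?_, Or.inr ⟨rfl, rfl⟩⟩
      · rw [happ]
        apply if_pos
        apply Or.inl
        rw [hv, Nat.cast_zero]
      · rw [happ]
        apply if_pos
        apply Or.inr
        rw [hv, zmod_last (by omega)]
        ring
      · intro k hk hkp hkq
        rw [happ]
        apply if_neg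
        rw [hv]
        rintro (h | h)
        · have : (0 : ℕ) = k := zmod_cast_inj (by omega) hk (by rw [Nat.cast_zero]; exact h)
          omega
        · have hk1 : ((k : ℕ) : ZMod l) = ((l - 1 : ℕ) : ZMod l) := by
            rw [zmod_last (by omega : 1 ≤ l)]
            linear_combination -h
          have := zmod_cast_inj hk (by omega : l - 1 < l) hk1
          omega
    · have hvm1 : ((v.val - 1 : ℕ) : ZMod l) = v - 1 := by
        rw [Nat.cast_sub (by omega : 1 ≤ v.val), hvv, Nat.cast_one]
      refine ⟨v.val, v.val - 1, by omega, hvlt, ?_, ?_, ?_, Or.inl (by omega)⟩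
      · rw [happ]
        apply if_pos
        apply Or.inr
        rw [hvm1]
        ring
      · rw [happ]
        exact if_pos (Or.inl hvv.symm)
      · intro k hk hkp hkq
        rw [happ]
        apply if_neg
        rintro (h | h)
        · have : k = v.val := zmod_cast_inj hk hvlt (by rw [hvv]; exact h.symm)
          exact hkp this
        · have hk1 : ((k : ℕ) : ZMod l) = ((v.val - 1 : ℕ) : ZMod l) := by
            rw [hvm1]
            linear_combination -h
          have := zmod_cast_inj hk (by omega : v.val - 1 < l) hk1
          omega
  have hsameF : ∀ k, k < l → k ≠ p → k ≠ q →
      termF htr i l c' k = termF htr i l c k := by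
    intro k hk h1 h2
    unfold termF
    rw [hsame k hk h1 h2]
  obtain ⟨B1, B2, B3, hBmem, hX, hX', hB2, hB1e, hB3e⟩ :=
    prod_two_update (termF htr i l c) (termF htr i l c') hq hp hsameF
  obtain ⟨B1Γ, B2Γ, B3Γ⟩ := hBmem Γ (fun k _ => termF_mem htr l c k)
  obtain ⟨sq, hsqΓ, hsqi, hsq⟩ := ggc_twist htr hπ (c ↑q)
  obtain ⟨sp2, hspΓ, hspi, hsp⟩ := ggc_twist htr hπ (c ↑p)
  have hgqΓ : ggc htr i (c ↑q) ∈ Γ := ggc_mem htr _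
  have hgpΓ : ggc htr i (c ↑p) ∈ Γ := ggc_mem htr _
  have hAP : AP htr i l c = B1 * termF htr i l c q * (B2 * termF htr i l c p * B3) := hX
  have hAP' : AP htr i l c' = B1 * termF htr i l c' q * (B2 * termF htr i l c' p * B3) := hX'
  rcases hscen with hpq | ⟨hq0, hpl⟩
  · -- adjacent positions, B2 = 1
    rw [hB2 hpq] at hAP hAP'
    rcases Nat.even_or_odd q with hqe | hqo
    · have hq2 : q % 2 = 0 := Nat.even_iff.1 hqe
      have hp2 : ¬ p % 2 = 0 := by omega
      have hFq : termF htr i l c q = ggc htr i (c ↑q) := if_pos hq2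
      have hFp : termF htr i l c p = (ggc htr i (c ↑p))⁻¹ := if_neg hp2
      have hF'q : termF htr i l c' q = π * ggc htr i (c ↑q) * sq⁻¹ := by
        unfold termF
        rw [if_pos hq2, hcq, hsq]
      have hF'p : termF htr i l c' p = (π * ggc htr i (c ↑p) * sp2⁻¹)⁻¹ := by
        unfold termF
        rw [if_neg hp2, hcp, hsp]
      rw [hAP, hAP', hFq, hFp, hF'q, hF'p]
      have key : (B1 * (π * ggc htr i (c ↑q) * sq⁻¹) * (1 * (π * ggc htr i (c ↑p) * sp2⁻¹)⁻¹ * B3))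
            * (B1 * ggc htr i (c ↑q) * (1 * (ggc htr i (c ↑p))⁻¹ * B3))⁻¹
          = B1 * ((π * (ggc htr i (c ↑q) * (sq⁻¹ * sp2) * (ggc htr i (c ↑q))⁻¹) * π⁻¹)
              * (π * (ggc htr i (c ↑q) * (ggc htr i (c ↑p))⁻¹) * π⁻¹
                * (ggc htr i (c ↑q) * (ggc htr i (c ↑p))⁻¹)⁻¹)) * B1⁻¹ := by
        group
      rw [key]
      have m1 : ggc htr i (c ↑q) * (sq⁻¹ * sp2) * (ggc htr i (c ↑q))⁻¹ ∈ M0 Γ i :=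
        conj_mem_M0 hgqΓ (mul_mem (inv_mem (stab_mem_M0 hsqΓ hsqi)) (stab_mem_M0 hspΓ hspi))
      have m2 := conj_mem_M0 hπ m1
      have m3 := comm_mem_M0 (i := i) hπ (mul_mem hgqΓ (inv_mem hgpΓ))
      exact conj_mem_M0 B1Γ (mul_mem m2 m3)
    · have hq2 : ¬ q % 2 = 0 := by
        rcases Nat.odd_iff.1 hqo with h
        omega
      have hp2 : p % 2 = 0 := by
        have := Nat.odd_iff.1 hqo
        omega
      have hFq : termF htr i l c q = (ggc htr i (c ↑q))⁻¹ := if_neg hq2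
      have hFp : termF htr i l c p = ggc htr i (c ↑p) := if_pos hp2
      have hF'q : termF htr i l c' q = (π * ggc htr i (c ↑q) * sq⁻¹)⁻¹ := by
        unfold termF
        rw [if_neg hq2, hcq, hsq]
      have hF'p : termF htr i l c' p = π * ggc htr i (c ↑p) * sp2⁻¹ := by
        unfold termF
        rw [if_pos hp2, hcp, hsp]
      rw [hAP, hAP', hFq, hFp, hF'q, hF'p]
      have key : (B1 * (π * ggc htr i (c ↑q) * sq⁻¹)⁻¹ * (1 * (π * ggc htr i (c ↑p) * sp2⁻¹) * B3))
            * (B1 * (ggc htr i (c ↑q))⁻¹ * (1 * ggc htr i (c ↑p) * B3))⁻¹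
          = B1 * (sq * (((ggc htr i (c ↑q))⁻¹ * ggc htr i (c ↑p)) * sp2⁻¹
              * ((ggc htr i (c ↑q))⁻¹ * ggc htr i (c ↑p))⁻¹)) * B1⁻¹ := by
        group
      rw [key]
      exact conj_mem_M0 B1Γ (mul_mem (stab_mem_M0 hsqΓ hsqi)
        (conj_mem_M0 (mul_mem (inv_mem hgqΓ) hgpΓ) (inv_mem (stab_mem_M0 hspΓ hspi))))
  · -- wrap-around: q = 0, p = l - 1, B1 = B3 = 1
    rw [hB1e hq0, hB3e hpl] at hAP hAP'
    have hq2 : q % 2 = 0 := by omega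
    have hp2 : ¬ p % 2 = 0 := by omega
    have hFq : termF htr i l c q = ggc htr i (c ↑q) := if_pos hq2
    have hFp : termF htr i l c p = (ggc htr i (c ↑p))⁻¹ := if_neg hp2
    have hF'q : termF htr i l c' q = π * ggc htr i (c ↑q) * sq⁻¹ := by
      unfold termF
      rw [if_pos hq2, hcq, hsq]
    have hF'p : termF htr i l c' p = (π * ggc htr i (c ↑p) * sp2⁻¹)⁻¹ := by
      unfold termF
      rw [if_neg hp2, hcp, hsp]
    rw [hAP, hAP', hFq, hFp, hF'q, hF'p]
    have key : (1 * (π * ggc htr i (c ↑q) * sq⁻¹) * (B2 * (π * ggc htr i (c ↑p) * sp2⁻¹)⁻¹ * 1))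
          * (1 * ggc htr i (c ↑q) * (B2 * (ggc htr i (c ↑p))⁻¹ * 1))⁻¹
        = (π * ((ggc htr i (c ↑q) * sq⁻¹ * (ggc htr i (c ↑q))⁻¹)
            * ((ggc htr i (c ↑q) * B2) * sp2 * (ggc htr i (c ↑q) * B2)⁻¹)) * π⁻¹)
          * (π * (ggc htr i (c ↑q) * (B2 * (ggc htr i (c ↑p))⁻¹)) * π⁻¹
            * (ggc htr i (c ↑q) * (B2 * (ggc htr i (c ↑p))⁻¹))⁻¹) := by
      group
    rw [key]
    have m1 : ggc htr i (c ↑q) * sq⁻¹ * (ggc htr i (c ↑q))⁻¹ ∈ M0 Γ i :=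
      conj_mem_M0 hgqΓ (inv_mem (stab_mem_M0 hsqΓ hsqi))
    have m2 : (ggc htr i (c ↑q) * B2) * sp2 * (ggc htr i (c ↑q) * B2)⁻¹ ∈ M0 Γ i :=
      conj_mem_M0 (mul_mem hgqΓ B2Γ) (stab_mem_M0 hspΓ hspi)
    have m3 := comm_mem_M0 (i := i) hπ (mul_mem hgqΓ (mul_mem B2Γ (inv_mem hgpΓ)))
    exact mul_mem (conj_mem_M0 hπ (mul_mem m1 m2)) m3

end Part5
section Part6

set_option linter.unusedSectionVars false

variable {m : ℕ} {Γ : Subgroup (Perm (Fin m))} {i : Fin m}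

lemma termF_mem_M0_of_i (htr : TransOn Γ) {l : ℕ} {c : ZMod l → Fin m} {k : ℕ}
    (h : c ↑k = i) : termF htr i l c k ∈ M0 Γ i := by
  unfold termF
  rw [h]
  split
  · exact ggc_i_mem_M0 htr
  · exact inv_mem (ggc_i_mem_M0 htr)

lemma cycle_switchSeq {l : ℕ} [NeZero l] (htr : TransOn Γ) (hl : 3 ≤ l) (heven : l % 2 = 0)
    (Λ : List (ZMod l × Perm (Fin m))) (hval : ValidSeq Γ Λ) (c : ZMod l → Fin m) :
    ∃ c', ECswitchSeq (cycleFromFn l c) Λ = cycleFromFn l c'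
      ∧ AP htr i l c' * (AP htr i l c)⁻¹ ∈ M0 Γ i := by
  induction Λ generalizing c with
  | nil =>
    refine ⟨c, rfl, ?_⟩
    rw [mul_inv_cancel]
    exact one_mem _
  | cons pr Λ ih =>
    obtain ⟨v, π⟩ := pr
    have hπ : π ∈ Γ := hval (v, π) (List.mem_cons_self)
    have hval' : ValidSeq Γ Λ := fun p hp => hval p (List.mem_cons_of_mem _ hp)
    have hstep : ECswitchSeq (cycleFromFn l c) ((v, π) :: Λ)
        = ECswitchSeq (cycleFromFn l (fun x => if v = x ∨ v = x + 1 then π (c x) else c x)) Λ := by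
      show ECswitchSeq (ECswitch (cycleFromFn l c) v π) Λ = _
      rw [cycle_switch]
    obtain ⟨c', heq, hm⟩ := ih hval' (fun x => if v = x ∨ v = x + 1 then π (c x) else c x)
    refine ⟨c', hstep.trans heq, ?_⟩
    have hs := AP_switch (i := i) htr hl heven c v hπ
    have key : AP htr i l c' * (AP htr i l c)⁻¹
        = (AP htr i l c' * (AP htr i l (fun x => if v = x ∨ v = x + 1 then π (c x) else c x))⁻¹)
          * (AP htr i l (fun x => if v = x ∨ v = x + 1 then π (c x) else c x)
            * (AP htr i l c)⁻¹) := by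
      group
    rw [key]
    exact mul_mem hm hs

lemma K2_invariant {l : ℕ} [NeZero l] (htr : TransOn Γ) (hl : 3 ≤ l) (heven : l % 2 = 0)
    (c : ZMod l → Fin m) (hK2 : SwHomK2 Γ (cycleFromFn l c) i) :
    AP htr i l c ∈ M0 Γ i := by
  obtain ⟨Λ, hval, f, hf⟩ := hK2
  obtain ⟨c', heq, hm⟩ := cycle_switchSeq (i := i) htr hl heven Λ hval c
  have hci : ∀ x : ZMod l, c' x = i := by
    intro x
    have hedge : ECswitchSeq (cycleFromFn l c) Λ x (x + 1) = some (c' x) := by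
      rw [heq, cycle_edge]
    exact (hf x (x + 1) _ hedge).2
  have hAPc' : AP htr i l c' ∈ M0 Γ i := by
    apply Subgroup.list_prod_mem
    intro x hx
    obtain ⟨k, _, rfl⟩ := List.mem_map.1 hx
    exact termF_mem_M0_of_i htr (hci _)
  have key : AP htr i l c = (AP htr i l c' * (AP htr i l c)⁻¹)⁻¹ * AP htr i l c' := by
    group
  rw [key]
  exact mul_mem (inv_mem hm) hAPc'

lemma AP_single {l : ℕ} [NeZero l] (htr : TransOn Γ) {c : ZMod l → Fin m} {k₀ : ℕ}
    (hk₀ : k₀ < l) (hcol : ∀ k, k < l → k ≠ k₀ → c ↑k = i)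
    (hAP : AP htr i l c ∈ M0 Γ i) : ggc htr i (c ↑k₀) ∈ M0 Γ i := by
  have hsplit := prod_split (termF htr i l c) hk₀
  have hB1 : ((List.range k₀).map (termF htr i l c)).prod ∈ M0 Γ i := by
    apply Subgroup.list_prod_mem
    intro x hx
    obtain ⟨k, hk, rfl⟩ := List.mem_map.1 hx
    rw [List.mem_range] at hk
    exact termF_mem_M0_of_i htr (hcol k (by omega) (by omega))
  have hB3 : ((List.range (l - (k₀+1))).map (fun t => termF htr i l c (t + (k₀+1)))).prod
      ∈ M0 Γ i := by
    apply Subgroup.list_prod_mem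
    intro x hx
    obtain ⟨k, hk, rfl⟩ := List.mem_map.1 hx
    rw [List.mem_range] at hk
    exact termF_mem_M0_of_i htr (hcol _ (by omega) (by omega))
  have hterm : termF htr i l c k₀ ∈ M0 Γ i := by
    have hAP2 : AP htr i l c
        = ((List.range k₀).map (termF htr i l c)).prod * termF htr i l c k₀
          * ((List.range (l - (k₀+1))).map (fun t => termF htr i l c (t + (k₀+1)))).prod :=
      hsplit
    have key : termF htr i l c k₀
        = (((List.range k₀).map (termF htr i l c)).prod)⁻¹ * AP htr i l c
          * (((List.range (l - (k₀+1))).map (fun t => termF htr i l c (t + (k₀+1)))).prod)⁻¹ := by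
      rw [hAP2]
      group
    rw [key]
    exact mul_mem (mul_mem (inv_mem hB1) hAP) (inv_mem hB3)
  unfold termF at hterm
  rcases Nat.decEq (k₀ % 2) 0 with h | h
  · rw [if_neg h] at hterm
    exact (inv_mem_iff (x := ggc htr i (c ↑k₀))).1 hterm
  · rw [if_pos h] at hterm
    exact hterm

end Part6
section Part7

set_option linter.unusedSectionVars false
set_option maxHeartbeats 1000000

variable {V : Type} [DecidableEq V] {m : ℕ} {Γ : Subgroup (Perm (Fin m))} {i : Fin m}

lemma invSeq_filter (T : List (V × Perm (Fin m))) (qq : V × Perm (Fin m) → Bool)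
    (h : ∀ x (π π' : Perm (Fin m)), qq (x, π) = qq (x, π')) :
    (invSeq T).filter qq = invSeq (T.filter qq) := by
  simp only [invSeq, List.filter_reverse, List.filter_map]
  have h2 : List.filter (qq ∘ fun p => (p.1, p.2⁻¹)) T = List.filter qq T :=
    List.filter_congr (fun p _ => h p.1 p.2⁻¹ p.2)
  rw [h2]

lemma app_invSeq (T : List (V × Perm (Fin m))) :
    app ((invSeq T).map Prod.snd) = (app (T.map Prod.snd))⁻¹ := by
  have h : (invSeq T).map Prod.snd = ((T.map Prod.snd).map (·⁻¹)).reverse := by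
    simp [invSeq, List.map_reverse, Function.comp_def]
  rw [h, app_reverse_inv]

/-- achievable double-switch subgroup at an edge `uv` -/
def achSub (Γ : Subgroup (Perm (Fin m))) (i : Fin m) (u v : V) :
    Subgroup (Perm (Fin m)) where
  carrier := {w | ∃ T : List (V × Perm (Fin m)), ValidSeq Γ T ∧ (∀ p ∈ T, p.1 = u ∨ p.1 = v) ∧
    app (T.map Prod.snd) = w ∧ app ((T.filter (fun p => p.1 = u)).map Prod.snd) = 1 ∧
    (app ((T.filter (fun p => p.1 = v)).map Prod.snd)) i = i}
  one_mem' := by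
    refine ⟨[], ?_, ?_, rfl, rfl, rfl⟩ <;> (intro p hp; cases hp)
  mul_mem' := by
    rintro a b ⟨Ta, hva, hwa, hwha, hua, hia⟩ ⟨Tb, hvb, hwb, hwhb, hub, hib⟩
    refine ⟨Tb ++ Ta, validSeq_append hvb hva, ?_, ?_, ?_, ?_⟩
    · intro p hp
      rcases List.mem_append.1 hp with h | h
      · exact hwb p h
      · exact hwa p h
    · rw [List.map_append, app_append, hwha, hwhb]
    · rw [List.filter_append, List.map_append, app_append, hua, hub, one_mul]
    · rw [List.filter_append, List.map_append, app_append, Equiv.Perm.mul_apply, hib, hia]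
  inv_mem' := by
    rintro a ⟨T, hv, hw, hwh, hu, hi2⟩
    refine ⟨invSeq T, invSeq_valid hv, ?_, ?_, ?_, ?_⟩
    · intro p hp
      simp only [invSeq, List.mem_reverse, List.mem_map] at hp
      obtain ⟨q, hq, rfl⟩ := hp
      exact hw q hq
    · rw [app_invSeq, hwh]
    · rw [invSeq_filter T (fun p => decide (p.1 = u)) (fun x π π' => rfl), app_invSeq, hu]
      simp
    · rw [invSeq_filter T (fun p => decide (p.1 = v)) (fun x π π' => rfl), app_invSeq]
      set β := app ((T.filter (fun p => p.1 = v)).map Prod.snd)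
      have h2 : β⁻¹ (β i) = i := Equiv.symm_apply_apply _ _
      rw [hi2] at h2
      exact h2

lemma M0_le_achSub (htr : TransOn Γ) (u v : V) (huv : u ≠ v) :
    M0 Γ i ≤ achSub Γ i u v := by
  rw [M0, Subgroup.closure_le]
  rintro π (⟨h1, h2⟩ | ⟨a, ha, b, hb, rfl⟩)
  · refine ⟨[(v, π)], ?_, ?_, ?_, ?_, ?_⟩
    · intro p hp
      rw [List.mem_singleton] at hp
      rw [hp]
      exact h1
    · intro p hp
      rw [List.mem_singleton] at hp
      rw [hp]
      exact Or.inr rfl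
    · rw [List.map_singleton, app_cons, app_nil, one_mul]
    · have h3 : ([(v, π)].filter (fun p => p.1 = u)) = [] := by
        simp [List.filter, huv.symm]
      rw [h3]
      rfl
    · have h3 : ([(v, π)].filter (fun p => p.1 = v)) = [(v, π)] := by
        simp [List.filter]
      rw [h3, List.map_singleton, app_cons, app_nil, one_mul]
      exact h2
  · refine ⟨[(v, b⁻¹), (u, a⁻¹), (v, b), (u, a)], ?_, ?_, ?_, ?_, ?_⟩
    · intro p hp
      simp only [List.mem_cons, List.mem_singleton] at hp
      rcases hp with rfl | rfl | rfl | rfl | h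
      · exact inv_mem hb
      · exact inv_mem ha
      · exact hb
      · exact ha
      · cases h
    · intro p hp
      simp only [List.mem_cons, List.mem_singleton] at hp
      rcases hp with rfl | rfl | rfl | rfl | h
      · exact Or.inr rfl
      · exact Or.inl rfl
      · exact Or.inr rfl
      · exact Or.inl rfl
      · cases h
    · simp only [List.map_cons, List.map_nil, app_cons, app_nil]
      group
    · have h3 : ([(v, b⁻¹), (u, a⁻¹), (v, b), (u, a)].filter (fun p => p.1 = u))
          = [(u, a⁻¹), (u, a)] := by
        simp [List.filter, huv.symm]
      rw [h3]
      simp only [List.map_cons, List.map_nil, app_cons, app_nil]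
      group
    · have h3 : ([(v, b⁻¹), (u, a⁻¹), (v, b), (u, a)].filter (fun p => p.1 = v))
          = [(v, b⁻¹), (v, b)] := by
        simp [List.filter, huv]
      rw [h3]
      simp only [List.map_cons, List.map_nil, app_cons, app_nil]
      have h4 : (1 : Perm (Fin m)) * b * b⁻¹ = 1 := by group
      rw [h4]
      rfl

/-- the set of bad (non-`i`-coloured) edge pairs -/
def badF [Fintype V] (X : EC V m) (i : Fin m) : Finset (V × V) :=
  Finset.univ.filter (fun pq : V × V => X pq.1 pq.2 ≠ none ∧ X pq.1 pq.2 ≠ some i)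

lemma mono_fix [Fintype V] (htr : TransOn Γ) :
    ∀ (n : ℕ) (X : EC V m), ECSymm X → (∀ w, X w w = none) →
    (∀ a b j, X a b = some j → ggc htr i j ∈ M0 Γ i) →
    (badF X i).card ≤ n →
    ∃ L, ValidSeq Γ L ∧ Mono (ECswitchSeq X L) i := by
  intro n
  induction n with
  | zero =>
    intro X hsym hloop hcol hcard
    refine ⟨[], fun p hp => absurd hp List.not_mem_nil, ?_⟩
    intro a b j hj
    have hj' : X a b = some j := hj
    by_contra hne
    have hm : (a, b) ∈ badF X i := by
      simp only [badF, Finset.mem_filter, Finset.mem_univ, true_and]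
      rw [hj']
      exact ⟨Option.some_ne_none _, fun h => hne (Option.some_injective _ h)⟩
    have := Finset.card_pos.2 ⟨_, hm⟩
    omega
  | succ n ih =>
    intro X hsym hloop hcol hcard
    by_cases hbad : badF X i = ∅
    · refine ⟨[], fun p hp => absurd hp List.not_mem_nil, ?_⟩
      intro a b j hj
      have hj' : X a b = some j := hj
      by_contra hne
      have hm : (a, b) ∈ badF X i := by
        simp only [badF, Finset.mem_filter, Finset.mem_univ, true_and]
        rw [hj']
        exact ⟨Option.some_ne_none _, fun h => hne (Option.some_injective _ h)⟩
      rw [hbad] at hm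
      cases hm
    · obtain ⟨⟨u, v⟩, hmem⟩ := Finset.nonempty_iff_ne_empty.2 hbad
      have hmemX : (u, v) ∈ badF X i := hmem
      simp only [badF, Finset.mem_filter, Finset.mem_univ, true_and] at hmem
      obtain ⟨hne, hni⟩ := hmem
      obtain ⟨j, hj⟩ := Option.ne_none_iff_exists'.1 hne
      have hji : j ≠ i := fun h => hni (by rw [hj, h])
      have huv : u ≠ v := by
        rintro rfl
        rw [hloop u] at hj
        exact Option.some_ne_none _ hj.symm
      have hgg : ggc htr i j ∈ M0 Γ i := hcol u v j hj
      have hwinv : (ggc htr i j)⁻¹ ∈ achSub Γ i u v :=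
        inv_mem (M0_le_achSub htr u v huv hgg)
      obtain ⟨T, hTval, hTvert, hTwhole, hTu, hTvi⟩ := hwinv
      set X' := ECswitchSeq X T with hX'
      have hfilt1 : ∀ a b : V, (u = a ∨ u = b) → (v = a ∨ v = b) →
          T.filter (fun p => p.1 = a ∨ p.1 = b) = T := by
        intro a b h1 h2
        apply List.filter_eq_self.2
        intro p hp
        rcases hTvert p hp with h | h <;> rw [h] <;> simp only [decide_eq_true_eq]
        · rcases h1 with rfl | rfl
          · exact Or.inl rfl
          · exact Or.inr rfl
        · rcases h2 with rfl | rfl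
          · exact Or.inl rfl
          · exact Or.inr rfl
      have hfilt2 : ∀ a b : V, (u = a ∨ u = b) → ¬(v = a ∨ v = b) →
          T.filter (fun p => p.1 = a ∨ p.1 = b) = T.filter (fun p => p.1 = u) := by
        intro a b h1 h2
        apply List.filter_congr
        intro p hp
        rcases hTvert p hp with h | h <;> rw [h]
        · apply decide_eq_decide.2
          constructor
          · intro _; rfl
          · intro _; exact h1
        · apply decide_eq_decide.2
          constructor
          · intro hcon; exact absurd hcon h2
          · intro hcon; exact absurd hcon.symm huv
      have hfilt3 : ∀ a b : V, ¬(u = a ∨ u = b) → (v = a ∨ v = b) →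
          T.filter (fun p => p.1 = a ∨ p.1 = b) = T.filter (fun p => p.1 = v) := by
        intro a b h1 h2
        apply List.filter_congr
        intro p hp
        rcases hTvert p hp with h | h <;> rw [h]
        · apply decide_eq_decide.2
          constructor
          · intro hcon; exact absurd hcon h1
          · intro hcon; exact absurd hcon huv
        · apply decide_eq_decide.2
          constructor
          · intro _; rfl
          · intro _; exact h2
      have hfilt4 : ∀ a b : V, ¬(u = a ∨ u = b) → ¬(v = a ∨ v = b) →
          T.filter (fun p => p.1 = a ∨ p.1 = b) = [] := by
        intro a b h1 h2
        apply List.filter_eq_nil_iff.2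
        intro p hp
        rcases hTvert p hp with h | h <;> rw [h] <;> simp only [decide_eq_true_eq]
        · exact h1
        · exact h2
      have heffA : ∀ a b : V, (u = a ∨ u = b) → (v = a ∨ v = b) →
          X' a b = (X a b).map ⇑((ggc htr i j)⁻¹) := by
        intro a b h1 h2
        rw [hX', eff, hfilt1 a b h1 h2, hTwhole]
      have heffB : ∀ a b : V, (u = a ∨ u = b) → ¬(v = a ∨ v = b) → X' a b = X a b := by
        intro a b h1 h2
        rw [hX', eff, hfilt2 a b h1 h2, hTu]
        simp
      set β := app ((T.filter (fun p => p.1 = v)).map Prod.snd) with hβ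
      have hβΓ : β ∈ Γ := by
        apply app_mem
        intro x hx
        obtain ⟨p, hp, rfl⟩ := List.mem_map.1 hx
        exact hTval p (List.mem_of_mem_filter hp)
      have heffC : ∀ a b : V, ¬(u = a ∨ u = b) → (v = a ∨ v = b) →
          X' a b = (X a b).map β := by
        intro a b h1 h2
        rw [hX', eff, hfilt3 a b h1 h2]
      have heffD : ∀ a b : V, ¬(u = a ∨ u = b) → ¬(v = a ∨ v = b) → X' a b = X a b := by
        intro a b h1 h2
        rw [hX', eff, hfilt4 a b h1 h2]
        simp [app_nil]
      have hswitched : X' u v = some i := by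
        rw [heffA u v (Or.inl rfl) (Or.inr rfl), hj]
        have h5 : (ggc htr i j)⁻¹ j = (ggc htr i j)⁻¹ ((ggc htr i j) i) := by
          rw [ggc_spec]
        simp only [Option.map_some]
        rw [h5, Equiv.Perm.inv_def, Equiv.symm_apply_apply]
      have hsym' : ECSymm X' := switchSeq_symm T X hsym
      have hloop' : ∀ w, X' w w = none := by
        intro w
        rw [hX', switchSeq_none_iff]
        exact hloop w
      have hcol' : ∀ a b j', X' a b = some j' → ggc htr i j' ∈ M0 Γ i := by
        intro a b j' hj'
        by_cases h1 : u = a ∨ u = b <;> by_cases h2 : v = a ∨ v = b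
        · -- the pair is {u, v}
          rw [heffA a b h1 h2] at hj'
          have hXab : X a b = some j := by
            rcases h1 with rfl | rfl
            · rcases h2 with rfl | rfl
              · exact absurd rfl huv
              · exact hj
            · rcases h2 with rfl | rfl
              · rw [hsym]; exact hj
              · exact absurd rfl huv
          rw [hXab] at hj'
          simp only [Option.map_some] at hj'
          have hj'i : j' = i := by
            have h5 : (ggc htr i j)⁻¹ j = (ggc htr i j)⁻¹ ((ggc htr i j) i) := by
              rw [ggc_spec]
            have := Option.some_injective _ hj'
            rw [← this, h5, Equiv.Perm.inv_def, Equiv.symm_apply_apply]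
          rw [hj'i]
          exact ggc_i_mem_M0 htr
        · rw [heffB a b h1 h2] at hj'
          exact hcol _ _ _ hj'
        · rw [heffC a b h1 h2] at hj'
          obtain ⟨j₀, hj₀⟩ : ∃ j₀, X a b = some j₀ := by
            cases hh : X a b with
            | none => rw [hh] at hj'; simp at hj'
            | some jj => exact ⟨jj, rfl⟩
          rw [hj₀] at hj'
          simp only [Option.map_some] at hj'
          have hj'e : j' = β j₀ := (Option.some_injective _ hj').symm
          obtain ⟨s, hsΓ, hsi, hs⟩ := ggc_twist htr hβΓ j₀
          rw [hj'e, hs]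
          exact mul_mem (mul_mem (stab_mem_M0 hβΓ hTvi) (hcol _ _ _ hj₀))
            (inv_mem (stab_mem_M0 hsΓ hsi))
        · rw [heffD a b h1 h2] at hj'
          exact hcol _ _ _ hj'
      have hsub : badF X' i ⊆ badF X i := by
        intro pq hpq
        obtain ⟨a, b⟩ := pq
        simp only [badF, Finset.mem_filter, Finset.mem_univ, true_and] at hpq ⊢
        obtain ⟨hne', hni'⟩ := hpq
        constructor
        · intro hcon
          exact hne' ((switchSeq_none_iff T X a b).2 hcon)
        · intro hXi
          by_cases h1 : u = a ∨ u = b <;> by_cases h2 : v = a ∨ v = b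
          · -- then {a,b} = {u,v} and X a b = some j ≠ some i
            have hXab : X a b = some j := by
              rcases h1 with rfl | rfl
              · rcases h2 with rfl | rfl
                · exact absurd rfl huv
                · exact hj
              · rcases h2 with rfl | rfl
                · rw [hsym]; exact hj
                · exact absurd rfl huv
            rw [hXab] at hXi
            exact hji (Option.some_injective _ hXi)
          · rw [heffB a b h1 h2, hXi] at hni'
            exact hni' rfl
          · rw [heffC a b h1 h2, hXi] at hni'
            simp only [Option.map_some] at hni'
            rw [hTvi] at hni'
            exact hni' rfl
          · rw [heffD a b h1 h2, hXi] at hni'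
            exact hni' rfl
      have hnotm : (u, v) ∉ badF X' i := by
        simp only [badF, Finset.mem_filter, Finset.mem_univ, true_and]
        rintro ⟨-, hcon⟩
        exact hcon hswitched
      have hcard' : (badF X' i).card < (badF X i).card := by
        apply Finset.card_lt_card
        exact ⟨hsub, fun hts => hnotm (hts hmemX)⟩
      obtain ⟨L', hval', hmono'⟩ := ih X' hsym' hloop' hcol' (by omega)
      refine ⟨T ++ L', validSeq_append hTval hval', ?_⟩
      rw [switchSeq_append, ← hX']
      exact hmono'

end Part7
section Part8

set_option linter.unusedSectionVars false
set_option maxHeartbeats 1000000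

variable {V : Type} [DecidableEq V] {m : ℕ} {Γ : Subgroup (Perm (Fin m))} {i : Fin m}

lemma rtg_walk {R : V → V → Prop} {a b : V} (h : Relation.ReflTransGen R a b) :
    ∃ (n : ℕ) (w : ℕ → V), w 0 = a ∧ w n = b ∧ ∀ k, k < n → R (w k) (w (k + 1)) := by
  induction h with
  | refl => exact ⟨0, fun _ => a, rfl, rfl, fun k hk => absurd hk (by omega)⟩
  | @tail b' c hab hbc ih =>
    obtain ⟨n, w, h0, hn, hs⟩ := ih
    refine ⟨n + 1, fun k => if k ≤ n then w k else c, by simp [h0], by simp, ?_⟩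
    intro k hk
    show R (if k ≤ n then w k else c) (if k + 1 ≤ n then w (k + 1) else c)
    by_cases h1 : k + 1 ≤ n
    · rw [if_pos (by omega : k ≤ n), if_pos h1]
      exact hs k (by omega)
    · have hk2 : k = n := by omega
      rw [if_pos (by omega : k ≤ n), if_neg h1, hk2, hn]
      exact hbc

lemma zmod_w_step {l : ℕ} [NeZero l] (hl : 3 ≤ l) (w : ℕ → V) (hcl : w l = w 0)
    (x : ZMod l) : w ((x + 1).val) = w (x.val + 1) := by
  haveI : Fact (1 < l) := ⟨by omega⟩
  have h1 : (x + 1).val = (x.val + 1) % l := by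
    rw [ZMod.val_add, ZMod.val_one]
  have h2 : x.val < l := ZMod.val_lt x
  by_cases h3 : x.val + 1 < l
  · rw [h1, Nat.mod_eq_of_lt h3]
  · have h4 : x.val + 1 = l := by omega
    rw [h1, h4, Nat.mod_self, ← hcl]

lemma closed_walk_cycle (Γ : Subgroup (Perm (Fin m))) {G : EC V m} (hsym : ECSymm G)
    {l : ℕ} [NeZero l] (hl : 3 ≤ l) (w : ℕ → V) (hcl : w l = w 0)
    (he : ∀ k, k < l → ∃ j, G (w k) (w (k + 1)) = some j) :
    ∃ c : ZMod l → Fin m, (∀ k, k < l → G (w k) (w (k + 1)) = some (c ↑k)) ∧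
      SwHom Γ (cycleFromFn l c) G := by
  have he' : ∀ x : ZMod l, ∃ j, G (w x.val) (w (x.val + 1)) = some j :=
    fun x => he x.val (ZMod.val_lt x)
  choose c hc using he'
  refine ⟨c, ?_, ⟨[], fun p hp => absurd hp List.not_mem_nil, fun x => w x.val, ?_⟩⟩
  · intro k hk
    have := hc ((k : ℕ) : ZMod l)
    rwa [ZMod.val_cast_of_lt hk] at this
  · intro x y j hj
    have hj' : cycleFromFn l c x y = some j := hj
    unfold cycleFromFn at hj'
    by_cases h1 : y = x + 1
    · rw [if_pos h1] at hj'
      have hjc : j = c x := (Option.some_injective _ hj').symm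
      subst h1
      have hgoal : G (w x.val) (w ((x + 1).val)) = some (c x) := by
        rw [zmod_w_step hl w hcl x]
        exact hc x
      rw [hjc]
      exact hgoal
    · rw [if_neg h1] at hj'
      by_cases h2 : x = y + 1
      · rw [if_pos h2] at hj'
        have hjc : j = c y := (Option.some_injective _ hj').symm
        subst h2
        have hgoal : G (w ((y + 1).val)) (w y.val) = some (c y) := by
          rw [zmod_w_step hl w hcl y, hsym]
          exact hc y
        rw [hjc]
        exact hgoal
      · rw [if_neg h2] at hj'
        exact absurd hj' (fun h => Option.some_ne_none _ h.symm)

lemma glue_walk {P : V → V → Prop} (hsymP : ∀ a b, P a b → P b a)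
    {r u v : V} {n1 n2 : ℕ} {w1 w2 : ℕ → V}
    (h10 : w1 0 = r) (h1n : w1 n1 = u) (h1e : ∀ k, k < n1 → P (w1 k) (w1 (k + 1)))
    (h20 : w2 0 = r) (h2n : w2 n2 = v) (h2e : ∀ k, k < n2 → P (w2 k) (w2 (k + 1))) :
    ∃ W : ℕ → V, W 0 = r ∧ W (n1 + 1 + n2) = r ∧ W n1 = u ∧ W (n1 + 1) = v ∧
      (∀ k, k < n1 → P (W k) (W (k + 1))) ∧
      (∀ k, n1 < k → k < n1 + 1 + n2 → P (W k) (W (k + 1))) := by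
  refine ⟨fun k => if k ≤ n1 then w1 k else w2 (n1 + 1 + n2 - k), ?_, ?_, ?_, ?_, ?_, ?_⟩
  · show (if 0 ≤ n1 then w1 0 else w2 (n1 + 1 + n2 - 0)) = r
    rw [if_pos (by omega), h10]
  · show (if n1 + 1 + n2 ≤ n1 then w1 (n1 + 1 + n2) else w2 (n1 + 1 + n2 - (n1 + 1 + n2))) = r
    rw [if_neg (by omega)]
    have e0 : n1 + 1 + n2 - (n1 + 1 + n2) = 0 := by omega
    rw [e0, h20]
  · show (if n1 ≤ n1 then w1 n1 else w2 (n1 + 1 + n2 - n1)) = u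
    rw [if_pos (le_refl n1), h1n]
  · show (if n1 + 1 ≤ n1 then w1 (n1 + 1) else w2 (n1 + 1 + n2 - (n1 + 1))) = v
    rw [if_neg (by omega)]
    have e0 : n1 + 1 + n2 - (n1 + 1) = n2 := by omega
    rw [e0, h2n]
  · intro k hk
    show P (if k ≤ n1 then w1 k else w2 (n1 + 1 + n2 - k))
      (if k + 1 ≤ n1 then w1 (k + 1) else w2 (n1 + 1 + n2 - (k + 1)))
    rw [if_pos (by omega : k ≤ n1), if_pos (by omega : k + 1 ≤ n1)]
    exact h1e k hk
  · intro k hk1 hk2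
    show P (if k ≤ n1 then w1 k else w2 (n1 + 1 + n2 - k))
      (if k + 1 ≤ n1 then w1 (k + 1) else w2 (n1 + 1 + n2 - (k + 1)))
    rw [if_neg (by omega : ¬ k ≤ n1), if_neg (by omega : ¬ k + 1 ≤ n1)]
    have e1 : n1 + 1 + n2 - k = (n1 + 1 + n2 - (k + 1)) + 1 := by omega
    rw [e1]
    exact hsymP _ _ (h2e _ (by omega))

lemma walk_parity {X : EC V m} {g : V → Bool}
    (hg : ∀ u v, (X u v).isSome → g u ≠ g v) (w : ℕ → V) :
    ∀ n, (∀ k, k < n → (X (w k) (w (k + 1))).isSome) →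
      g (w n) = xor (decide (n % 2 = 1)) (g (w 0)) := by
  intro n
  induction n with
  | zero => simp
  | succ n ih =>
    intro hke
    have hstep := hg (w n) (w (n + 1)) (hke n (by omega))
    have hih := ih (fun k hk => hke k (by omega))
    have hnot : g (w (n + 1)) = ! g (w n) := by
      revert hstep
      cases g (w (n + 1)) <;> cases g (w n) <;> simp
    rw [hnot, hih]
    rcases Nat.even_or_odd n with he | ho
    · have e1 : n % 2 = 0 := Nat.even_iff.1 he
      have e2 : (n + 1) % 2 = 1 := by omega
      simp [e1, e2]
    · have e1 : n % 2 = 1 := Nat.odd_iff.1 ho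
      have e2 : (n + 1) % 2 = 0 := by omega
      simp [e1, e2]

lemma rtg_cross {R : V → V → Prop} {S : Finset V} {a b : V}
    (h : Relation.ReflTransGen R a b) (ha : a ∈ S) (hb : b ∉ S) :
    ∃ u ∈ S, ∃ v, v ∉ S ∧ R u v := by
  induction h with
  | refl => exact absurd ha hb
  | @tail b' c hab hbc ih =>
    by_cases h1 : b' ∈ S
    · exact ⟨b', h1, c, hb, hbc⟩
    · exact ih h1

end Part8
section Part9

set_option linter.unusedSectionVars false
set_option maxHeartbeats 1000000

variable {V : Type} [DecidableEq V] {m : ℕ} {Γ : Subgroup (Perm (Fin m))} {i : Fin m}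

lemma norm_aux [Fintype V] (htr : TransOn Γ) (r : V) :
    ∀ (k : ℕ) (H : EC V m), ECSymm H → Conn H → ∀ S : Finset V, r ∈ S →
    (Finset.univ \ S).card ≤ k →
    (∀ v ∈ S, Relation.ReflTransGen (fun a b => a ∈ S ∧ b ∈ S ∧ H a b = some i) r v) →
    ∃ L, ValidSeq Γ L ∧
      ∀ v : V, Relation.ReflTransGen (fun a b => ECswitchSeq H L a b = some i) r v := by
  intro k
  induction k with
  | zero =>
    intro H hsym hconn S hr hcard hreach
    have hSuniv : ∀ v : V, v ∈ S := by
      intro v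
      by_contra hv
      have : v ∈ Finset.univ \ S := Finset.mem_sdiff.2 ⟨Finset.mem_univ v, hv⟩
      have := Finset.card_pos.2 ⟨v, this⟩
      omega
    refine ⟨[], fun p hp => absurd hp List.not_mem_nil, ?_⟩
    intro v
    exact Relation.ReflTransGen.mono (fun a b h => h.2.2) _ _ (hreach v (hSuniv v))
  | succ k ih =>
    intro H hsym hconn S hr hcard hreach
    by_cases hS : ∀ v : V, v ∈ S
    · refine ⟨[], fun p hp => absurd hp List.not_mem_nil, ?_⟩
      intro v
      exact Relation.ReflTransGen.mono (fun a b h => h.2.2) _ _ (hreach v (hS v))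
    · push_neg at hS
      obtain ⟨x, hxS⟩ := hS
      obtain ⟨u, huS, v', hv'S, hedge⟩ := rtg_cross (hconn r x) hr hxS
      obtain ⟨j, hj⟩ := Option.isSome_iff_exists.1 hedge
      obtain ⟨π, hπΓ, hπj⟩ := htr j i
      set H' := ECswitch H v' π with hH'
      have hH'seq : H' = ECswitchSeq H [(v', π)] := rfl
      have hsym' : ECSymm H' := by
        rw [hH'seq]
        exact switchSeq_symm [(v', π)] H hsym
      have hconn' : Conn H' := by
        intro a b
        refine Relation.ReflTransGen.mono (fun a b h => ?_) _ _ (hconn a b)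
        have : (H' a b).isSome = (H a b).isSome := by
          rw [hH'seq]
          exact switchSeq_isSome [(v', π)] H a b
        rw [this]
        exact h
      have hunchanged : ∀ a b : V, a ∈ S → b ∈ S → H' a b = H a b := by
        intro a b ha hb
        rw [hH']
        unfold ECswitch
        apply if_neg
        rintro (rfl | rfl)
        · exact hv'S ha
        · exact hv'S hb
      have hcard' : (Finset.univ \ insert v' S).card ≤ k := by
        have he : Finset.univ \ insert v' S = (Finset.univ \ S).erase v' := by
          ext y
          simp only [Finset.mem_sdiff, Finset.mem_insert, Finset.mem_erase, Finset.mem_univ,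
            true_and]
          tauto
        have hv'mem : v' ∈ Finset.univ \ S := Finset.mem_sdiff.2 ⟨Finset.mem_univ v', hv'S⟩
        rw [he, Finset.card_erase_of_mem hv'mem]
        omega
      have hlift : ∀ w ∈ S, Relation.ReflTransGen
          (fun a b => a ∈ insert v' S ∧ b ∈ insert v' S ∧ H' a b = some i) r w := by
        intro w hw
        refine Relation.ReflTransGen.mono (fun a b h => ?_) _ _ (hreach w hw)
        exact ⟨Finset.mem_insert_of_mem h.1, Finset.mem_insert_of_mem h.2.1,
          by rw [hunchanged a b h.1 h.2.1]; exact h.2.2⟩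
      have hreach' : ∀ w ∈ insert v' S, Relation.ReflTransGen
          (fun a b => a ∈ insert v' S ∧ b ∈ insert v' S ∧ H' a b = some i) r w := by
        intro w hw
        rcases Finset.mem_insert.1 hw with rfl | hw2
        · refine Relation.ReflTransGen.tail (hlift u huS) ?_
          refine ⟨Finset.mem_insert_of_mem huS, Finset.mem_insert_self _ _, ?_⟩
          rw [hH']
          show (if u = w ∨ w = w then (H u w).map π else H u w) = some i
          rw [if_pos (Or.inr rfl), hj]
          simp only [Option.map_some]
          rw [hπj]
        · exact hlift w hw2
      obtain ⟨L', hL'v, hL'⟩ := ih H' hsym' hconn' (insert v' S)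
        (Finset.mem_insert_of_mem hr) hcard' hreach'
      refine ⟨(v', π) :: L', ?_, ?_⟩
      · intro p hp
        rcases List.mem_cons.1 hp with rfl | hp2
        · exact hπΓ
        · exact hL'v p hp2
      · exact hL'

end Part9
set_option linter.unusedSectionVars false
set_option maxHeartbeats 2000000

/-- A connected `m`-edge-coloured graph `G` admits a `Γ`-switchable
homomorphism to `K₂^i` iff no coloured cycle that fails to map `Γ`-switchably to `K₂^i`
admits a `Γ`-switchable homomorphism into `G`. -/
theorem swhomK2_iff_no_bad_cycle {V : Type} [Fintype V] [DecidableEq V] {m : ℕ}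
    (Γ : Subgroup (Perm (Fin m))) (htr : TransOn Γ) (G : EC V m) (hsym : ECSymm G)
    (hconn : Conn G) (i : Fin m) :
    SwHomK2 Γ G i ↔
      ∀ (l : ℕ), 3 ≤ l → ∀ c : ZMod l → Fin m,
        ¬ SwHomK2 Γ (cycleFromFn l c) i → ¬ SwHom Γ (cycleFromFn l c) G := by
  constructor
  · intro hK2 l hl c hnot hhom
    haveI : NeZero l := ⟨by omega⟩
    exact hnot (forward_comp hK2 hhom)
  · intro H
    rcases isEmpty_or_nonempty V with hemp | hne
    · exact ⟨[], fun p hp => absurd hp List.not_mem_nil, fun _ => true,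
        fun u => isEmptyElim u⟩
    obtain ⟨r⟩ := hne
    -- Step 1: G has no loops
    have hloop : ∀ w0, G w0 w0 = none := by
      intro w0
      by_contra hn
      obtain ⟨j, hj⟩ := Option.ne_none_iff_exists'.1 hn
      haveI : NeZero 3 := ⟨by omega⟩
      obtain ⟨c, hcc, hhom⟩ := closed_walk_cycle Γ hsym (l := 3) (by omega)
        (fun _ => w0) rfl (fun k _ => ⟨j, hj⟩)
      exact H 3 (by omega) c (odd_no_K2 (by omega) c i) hhom
    -- Step 2: bipartition
    have hwalkex : ∀ v : V, ∃ (n : ℕ) (w : ℕ → V), w 0 = r ∧ w n = v ∧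
        ∀ k, k < n → (G (w k) (w (k + 1))).isSome := fun v => rtg_walk (hconn r v)
    choose nn ww hprop using hwalkex
    have hw0 : ∀ v, ww v 0 = r := fun v => (hprop v).1
    have hwn : ∀ v, ww v (nn v) = v := fun v => (hprop v).2.1
    have hwe : ∀ v, ∀ k, k < nn v → (G (ww v k) (ww v (k + 1))).isSome :=
      fun v => (hprop v).2.2
    set g : V → Bool := fun v => decide (nn v % 2 = 1) with hgdef
    have hg : ∀ u v, (G u v).isSome → g u ≠ g v := by
      intro u v he hguv
      have hpar : nn u % 2 = 1 ↔ nn v % 2 = 1 := by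
        have : decide (nn u % 2 = 1) = decide (nn v % 2 = 1) := hguv
        exact decide_eq_decide.1 this
      obtain ⟨W, hW0, hWl, hWu, hWv, hWfront, hWback⟩ := glue_walk
        (P := fun a b => (G a b).isSome)
        (fun a b h => by show (G b a).isSome = true; rw [hsym b a]; exact h)
        (hw0 u) (hwn u) (hwe u) (hw0 v) (hwn v) (hwe v)
      set l := nn u + 1 + nn v with hldef
      have hlodd : l % 2 = 1 := by omega
      have hl3 : 3 ≤ l := by
        by_contra h3
        have hl1 : l = 1 := by omega
        have hnu : nn u = 0 := by omega
        have hnv : nn v = 0 := by omega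
        have hu : u = r := by rw [← hwn u, hnu, hw0 u]
        have hv : v = r := by rw [← hwn v, hnv, hw0 v]
        rw [hu, hv, hloop r] at he
        simp at he
      have hedge_mid : (G (W (nn u)) (W (nn u + 1))).isSome := by
        rw [hWu, hWv]
        exact he
      have hall : ∀ k, k < l → ∃ j, G (W k) (W (k + 1)) = some j := by
        intro k hk
        rcases lt_trichotomy k (nn u) with h | h | h
        · exact Option.isSome_iff_exists.1 (hWfront k h)
        · subst h
          exact Option.isSome_iff_exists.1 hedge_mid
        · exact Option.isSome_iff_exists.1 (hWback k h hk)
      haveI : NeZero l := ⟨by omega⟩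
      obtain ⟨c, hcc, hhom⟩ := closed_walk_cycle Γ hsym hl3 W (by rw [hWl, hW0]) hall
      exact H l hl3 c (odd_no_K2 hlodd c i) hhom
    -- Step 3: normalization
    obtain ⟨L1, hL1v, hL1reach⟩ := norm_aux (i := i) htr r (Finset.univ \ {r}).card G hsym hconn
      {r} (Finset.mem_singleton_self r) (le_refl _)
      (by
        intro v hv
        rw [Finset.mem_singleton] at hv
        subst hv
        exact Relation.ReflTransGen.refl)
    set G1 := ECswitchSeq G L1 with hG1
    have hsym1 : ECSymm G1 := switchSeq_symm L1 G hsym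
    have hloop1 : ∀ w0, G1 w0 w0 = none := by
      intro w0
      rw [hG1, switchSeq_none_iff]
      exact hloop w0
    have hsome1 : ∀ a b, (G1 a b).isSome = (G a b).isSome := fun a b => switchSeq_isSome L1 G a b
    -- hypothesis transfer to G1
    have Hyp1 : ∀ l, 3 ≤ l → ∀ c : ZMod l → Fin m,
        SwHom Γ (cycleFromFn l c) G1 → SwHomK2 Γ (cycleFromFn l c) i := by
      intro l hl c hhom
      haveI : NeZero l := ⟨by omega⟩
      by_contra hnot
      apply H l hl c hnot
      obtain ⟨S', hSv, φ, hφ⟩ := hhom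
      refine ⟨S' ++ pullSeq φ (invSeq L1),
        validSeq_append hSv (pullSeq_valid (invSeq_valid hL1v)), φ, ?_⟩
      intro x y j hj
      rw [switchSeq_append] at hj
      have hinj : ∀ a b, ECswitchSeq (cycleFromFn l c) S' a b ≠ none → φ a ≠ φ b := by
        intro a b hne2 heq
        obtain ⟨j₀, hj₀⟩ := Option.ne_none_iff_exists'.1 hne2
        have h2 := hφ a b j₀ hj₀
        rw [heq, hloop1 (φ b)] at h2
        exact Option.some_ne_none _ h2.symm
      have h3 := pullSeq_hom φ (ECswitchSeq (cycleFromFn l c) S') G1 hφ hinj (invSeq L1) x y j hj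
      rw [hG1, ← switchSeq_append, switchSeq_inv_cancel] at h3
      exact h3
    -- Step 4: colour condition on edges of G1
    have hiwalk : ∀ v : V, ∃ (n : ℕ) (w : ℕ → V), w 0 = r ∧ w n = v ∧
        ∀ k, k < n → G1 (w k) (w (k + 1)) = some i := fun v => rtg_walk (hL1reach v)
    have hColOK : ∀ a b j, G1 a b = some j → ggc htr i j ∈ M0 Γ i := by
      intro a b j hedge
      have hab : a ≠ b := by
        rintro rfl
        rw [hloop1] at hedge
        exact Option.some_ne_none _ hedge.symm
      obtain ⟨n1, w1, h10, h1n, h1e⟩ := hiwalk a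
      obtain ⟨n2, w2, h20, h2n, h2e⟩ := hiwalk b
      obtain ⟨s, hrs⟩ : ∃ s, G1 r s = some i := by
        rcases Nat.eq_zero_or_pos n1 with h | h
        · rcases Nat.eq_zero_or_pos n2 with h2 | h2
          · exfalso
            apply hab
            rw [← h1n, ← h2n, h, h2, h10, h20]
          · refine ⟨w2 1, ?_⟩
            rw [← h20]
            exact h2e 0 h2
        · refine ⟨w1 1, ?_⟩
          rw [← h10]
          exact h1e 0 h
      have hsr : G1 s r = some i := by rw [hsym1]; exact hrs
      set w1' : ℕ → V := fun k => if k = 0 then r else if k = 1 then s else w1 (k - 2) with hw1'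
      have h10' : w1' 0 = r := rfl
      have h1n' : w1' (n1 + 2) = a := by
        show (if n1 + 2 = 0 then r else if n1 + 2 = 1 then s else w1 (n1 + 2 - 2)) = a
        rw [if_neg (by omega), if_neg (by omega)]
        have e : n1 + 2 - 2 = n1 := by omega
        rw [e, h1n]
      have h1e' : ∀ k, k < n1 + 2 → G1 (w1' k) (w1' (k + 1)) = some i := by
        intro k hk
        show G1 (if k = 0 then r else if k = 1 then s else w1 (k - 2))
          (if k + 1 = 0 then r else if k + 1 = 1 then s else w1 (k + 1 - 2)) = some i
        rcases k with _ | k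
        · rw [if_pos rfl, if_neg (by omega), if_pos (by omega)]
          exact hrs
        rcases k with _ | k
        · rw [if_neg (by omega), if_pos rfl, if_neg (by omega), if_neg (by omega)]
          have e : 1 + 1 - 2 = 0 := by omega
          rw [e, h10]
          exact hsr
        · rw [if_neg (by omega), if_neg (by omega), if_neg (by omega), if_neg (by omega)]
          have e1 : k + 2 - 2 = k := by omega
          have e2 : k + 2 + 1 - 2 = k + 1 := by omega
          rw [e1, e2]
          exact h1e k (by omega)
      obtain ⟨W, hW0, hWl, hWmid1, hWmid2, hWfront, hWback⟩ := glue_walk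
        (P := fun x y => G1 x y = some i)
        (fun x y h => by show G1 y x = some i; rw [hsym1 y x]; exact h)
        h10' h1n' h1e' h20 h2n h2e
      set l := n1 + 2 + 1 + n2 with hldef
      set k₀ := n1 + 2 with hk₀def
      have hWedge : G1 (W k₀) (W (k₀ + 1)) = some j := by
        rw [hWmid1, hWmid2]
        exact hedge
      have hall : ∀ k, k < l → ∃ j', G1 (W k) (W (k + 1)) = some j' := by
        intro k hk
        rcases lt_trichotomy k k₀ with h | h | h
        · exact ⟨i, hWfront k h⟩
        · subst h
          exact ⟨j, hWedge⟩
        · exact ⟨i, hWback k h hk⟩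
      have hpar1 : g a = xor (decide (n1 % 2 = 1)) (g r) := by
        have hp := walk_parity (X := G) hg w1 n1 (fun k hk => by
          rw [← hsome1, h1e k hk]
          rfl)
        rwa [h1n, h10] at hp
      have hpar2 : g b = xor (decide (n2 % 2 = 1)) (g r) := by
        have hp := walk_parity (X := G) hg w2 n2 (fun k hk => by
          rw [← hsome1, h2e k hk]
          rfl)
        rwa [h2n, h20] at hp
      have hgab : g a ≠ g b := by
        apply hg
        have h4 : (G1 a b).isSome := by rw [hedge]; rfl
        rwa [hsome1] at h4
      have hparne : ¬ (n1 % 2 = 1 ↔ n2 % 2 = 1) := by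
        intro hiff
        apply hgab
        rw [hpar1, hpar2, decide_eq_decide.2 hiff]
      have heven : l % 2 = 0 := by omega
      have hl3 : 3 ≤ l := by omega
      haveI : NeZero l := ⟨by omega⟩
      obtain ⟨c, hcc, hhom⟩ := closed_walk_cycle Γ hsym1 hl3 W (by rw [hWl, hW0]) hall
      have hK2c := Hyp1 l hl3 c hhom
      have hAP := K2_invariant htr hl3 heven c hK2c
      have hcol' : ∀ k, k < l → k ≠ k₀ → c ↑k = i := by
        intro k hk hkne
        have h1 := hcc k hk
        rcases lt_trichotomy k k₀ with h | h | h
        · exact (Option.some_injective _ ((hWfront k h).symm.trans h1)).symm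
        · exact absurd h hkne
        · exact (Option.some_injective _ ((hWback k h hk).symm.trans h1)).symm
      have hcj : c ↑k₀ = j := by
        have h1 := hcc k₀ (by omega)
        exact (Option.some_injective _ (hWedge.symm.trans h1)).symm
      have hgm := AP_single htr (by omega : k₀ < l) hcol' hAP
      rwa [hcj] at hgm
    -- Step 5: make G1 monochromatic
    obtain ⟨L2, hL2v, hL2mono⟩ := mono_fix htr (badF G1 i).card G1 hsym1 hloop1 hColOK (le_refl _)
    refine ⟨L1 ++ L2, validSeq_append hL1v hL2v, g, ?_⟩
    intro u v j hj
    rw [switchSeq_append, ← hG1] at hj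
    constructor
    · apply hg
      have h1 : (ECswitchSeq G1 L2 u v).isSome := by rw [hj]; rfl
      rw [switchSeq_isSome, hsome1] at h1
      exact h1
    · exact hL2mono u v j hj
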